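/- (Lemma C.4, filter stability.) For all π, π̃ ∈ M_1 one has Σ_{m=0}^{q−1} ∫_{t*_m}^{t*_{m+1}} ∫_{ℝ^d} |Ψ(π,y,s) − Ψ(π̃,y,s)| · Ψ̄_m(π,y,s) dy ds ≤ 2 |π − π̃|, where |Ψ(π,y,s) − Ψ(π̃,y,s)| denotes the ℓ¹-distance in ℝ^q and the integrals are with respect to Lebesgue measure. -/

import Mathlib

open MeasureTheory Finset

noncomputable section

namespace PDMP

/-- Integrated jump rate `Λ_i(t) = ∫_0^t λ_i(s) ds`. -/
def Lam (lam : ℕ → ℝ → ℝ) (i : ℕ) (t : ℝ) : ℝ := ∫ s in (0:ℝ)..t, lam i s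

/-- The unnormalized filter density `Ψ_m^j(π,y,s)`. -/
def psiNum (q d : ℕ) (ts : ℕ → ℝ) (lam : ℕ → ℝ → ℝ) (Q : ℕ → ℕ → ℝ → ℝ)
    (fW : (Fin d → ℝ) → ℝ) (phi : ℕ → Fin d → ℝ)
    (m : ℕ) (p : ℕ → ℝ) (y : Fin d → ℝ) (s : ℝ) (j : ℕ) : ℝ :=
  ∑ i ∈ Finset.Icc (m + 1) q,
    p i * lam i s * Real.exp (-(Lam lam i s)) * Q i j s * fW (y - phi j)

/-- `Ψ̄_m(π,y,s) = Σ_k Ψ_m^k(π,y,s)`. -/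
def psiBar (q d : ℕ) (ts : ℕ → ℝ) (lam : ℕ → ℝ → ℝ) (Q : ℕ → ℕ → ℝ → ℝ)
    (fW : (Fin d → ℝ) → ℝ) (phi : ℕ → Fin d → ℝ)
    (m : ℕ) (p : ℕ → ℝ) (y : Fin d → ℝ) (s : ℝ) : ℝ :=
  ∑ k ∈ Finset.Icc 1 q, psiNum q d ts lam Q fW phi m p y s k

open Classical in
/-- The filter update `Ψ(π,y,s)`. -/
def Psi (q d : ℕ) (ts : ℕ → ℝ) (lam : ℕ → ℝ → ℝ) (Q : ℕ → ℕ → ℝ → ℝ)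
    (fW : (Fin d → ℝ) → ℝ) (phi : ℕ → Fin d → ℝ)
    (p : ℕ → ℝ) (y : Fin d → ℝ) (s : ℝ) : ℕ → ℝ :=
  if ∃ m, 1 ≤ m ∧ m ≤ q ∧ s = ts m then
    let m := sInf {m | 1 ≤ m ∧ m ≤ q ∧ s = ts m}
    if 0 < ∑ k ∈ Finset.Icc 1 q, Q m k (ts m) * fW (y - phi k) then
      fun j => Q m j (ts m) * fW (y - phi j) /
        (∑ k ∈ Finset.Icc 1 q, Q m k (ts m) * fW (y - phi k))
    else p
  else if ∃ m, m < q ∧ ts m < s ∧ s < ts (m + 1) then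
    let m := sInf {m | m < q ∧ ts m < s ∧ s < ts (m + 1)}
    if 0 < psiBar q d ts lam Q fW phi m p y s then
      fun j => psiNum q d ts lam Q fW phi m p y s j / psiBar q d ts lam Q fW phi m p y s
    else p
  else p

/-- ℓ¹ distance on `ℝ^q` (coordinates `1,…,q`). -/
def l1 (q : ℕ) (p p' : ℕ → ℝ) : ℝ := ∑ i ∈ Finset.Icc 1 q, |p i - p' i|

/-- Membership in the probability simplex `M_1`. -/
def mem1 (q : ℕ) (p : ℕ → ℝ) : Prop :=
  (∀ i ∈ Finset.Icc 1 q, 0 ≤ p i) ∧ ∑ i ∈ Finset.Icc 1 q, p i = 1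

/-- The operator `I`. -/
def Iop (q d : ℕ) (ts : ℕ → ℝ) (lam : ℕ → ℝ → ℝ) (Q : ℕ → ℕ → ℝ → ℝ)
    (fW : (Fin d → ℝ) → ℝ) (phi : ℕ → Fin d → ℝ)
    (v : (ℕ → ℝ) → ℝ) (p : ℕ → ℝ) (u : ℝ) : ℝ :=
  ∑ i ∈ Finset.Icc 1 q, p i *
    ∫ s in (0:ℝ)..(min u (ts i)),
      lam i s * Real.exp (-(Lam lam i s)) *
        ∫ y : Fin d → ℝ,
          v (Psi q d ts lam Q fW phi p y s) *
            ∑ j ∈ Finset.Icc 1 q, Q i j s * fW (y - phi j)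

/-- Boundary (forced-jump) term appearing in the operator `G`. -/
def bTerm (q d : ℕ) (ts : ℕ → ℝ) (lam : ℕ → ℝ → ℝ) (Q : ℕ → ℕ → ℝ → ℝ)
    (fW : (Fin d → ℝ) → ℝ) (phi : ℕ → Fin d → ℝ)
    (v : (ℕ → ℝ) → ℝ) (p : ℕ → ℝ) (i : ℕ) : ℝ :=
  p i * Real.exp (-(Lam lam i (ts i))) *
    ∫ y : Fin d → ℝ,
      v (Psi q d ts lam Q fW phi p y (ts i)) *
        ∑ j ∈ Finset.Icc 1 q, Q i j (ts i) * fW (y - phi j)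

/-- The operator `G`. -/
def Gop (q d : ℕ) (ts : ℕ → ℝ) (lam : ℕ → ℝ → ℝ) (Q : ℕ → ℕ → ℝ → ℝ)
    (fW : (Fin d → ℝ) → ℝ) (phi : ℕ → Fin d → ℝ)
    (v : (ℕ → ℝ) → ℝ) (p : ℕ → ℝ) (u : ℝ) : ℝ :=
  Iop q d ts lam Q fW phi v p u +
    ∑ i ∈ Finset.Icc 1 q, if ts i ≤ u then bTerm q d ts lam Q fW phi v p i else 0

/-- The operator `H`. -/
def Hop (q : ℕ) (ts : ℕ → ℝ) (lam : ℕ → ℝ → ℝ)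
    (g : ℕ → ℝ → ℝ) (p : ℕ → ℝ) (u : ℝ) : ℝ :=
  ∑ i ∈ Finset.Icc 1 q, if u < ts i then p i * Real.exp (-(Lam lam i u)) * g i u else 0

/-- The operator `J`. -/
def Jop (q d : ℕ) (ts : ℕ → ℝ) (lam : ℕ → ℝ → ℝ) (Q : ℕ → ℕ → ℝ → ℝ)
    (fW : (Fin d → ℝ) → ℝ) (phi : ℕ → Fin d → ℝ)
    (v : (ℕ → ℝ) → ℝ) (g : ℕ → ℝ → ℝ) (p : ℕ → ℝ) (u : ℝ) : ℝ :=
  Hop q ts lam g p u + Gop q d ts lam Q fW phi v p u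

/-- The operator `K`. -/
def Kop (q d : ℕ) (ts : ℕ → ℝ) (lam : ℕ → ℝ → ℝ) (Q : ℕ → ℕ → ℝ → ℝ)
    (fW : (Fin d → ℝ) → ℝ) (phi : ℕ → Fin d → ℝ)
    (v : (ℕ → ℝ) → ℝ) (p : ℕ → ℝ) : ℝ :=
  Gop q d ts lam Q fW phi v p (ts q)

/-- The dynamic programming operator `L(v,g)(π) = sup_{u ≥ 0} J(v,g)(π,u)`. -/
def Lop (q d : ℕ) (ts : ℕ → ℝ) (lam : ℕ → ℝ → ℝ) (Q : ℕ → ℕ → ℝ → ℝ)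
    (fW : (Fin d → ℝ) → ℝ) (phi : ℕ → Fin d → ℝ)
    (v : (ℕ → ℝ) → ℝ) (g : ℕ → ℝ → ℝ) (p : ℕ → ℝ) : ℝ :=
  ⨆ u : Set.Ici (0:ℝ), Jop q d ts lam Q fW phi v g p u.1

/-- The operator `H^m`. -/
def Hm (q : ℕ) (ts : ℕ → ℝ) (lam : ℕ → ℝ → ℝ) (m : ℕ)
    (g : ℕ → ℝ → ℝ) (p : ℕ → ℝ) (u : ℝ) : ℝ :=
  if u < ts m then Hop q ts lam g p (ts m)
  else ∑ i ∈ Finset.Icc (m + 1) q,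
    p i * Real.exp (-(Lam lam i (min u (ts (m + 1))))) * g i (min u (ts (m + 1)))

/-- The operator `G^m`. -/
def Gm (q d : ℕ) (ts : ℕ → ℝ) (lam : ℕ → ℝ → ℝ) (Q : ℕ → ℕ → ℝ → ℝ)
    (fW : (Fin d → ℝ) → ℝ) (phi : ℕ → Fin d → ℝ) (m : ℕ)
    (v : (ℕ → ℝ) → ℝ) (p : ℕ → ℝ) (u : ℝ) : ℝ :=
  if u < ts m then Gop q d ts lam Q fW phi v p (ts m)
  else Iop q d ts lam Q fW phi v p (min u (ts (m + 1))) +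
    ∑ i ∈ Finset.Icc 1 m, bTerm q d ts lam Q fW phi v p i

/-- The discretization grid `Gr_m(Δ)`. -/
def grid (ts : ℕ → ℝ) (Δ : ℝ) (m : ℕ) : Set ℝ :=
  {u | (∃ i : ℕ, 1 ≤ i ∧ ts m + i * Δ ≤ ts (m + 1) - Δ ∧ u = ts m + i * Δ) ∨
    u = ts (m + 1) - Δ}


-- Auxiliary lemmas


lemma intInt_of_bdd {g : ℝ → ℝ} (hg : Measurable g) (C : ℝ) (a b : ℝ)
    (h : ∀ s ∈ Set.uIoc a b, |g s| ≤ C) : IntervalIntegrable g volume a b := by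
  rw [intervalIntegrable_iff]
  refine Integrable.mono' (g := fun _ => C) ?_ hg.aestronglyMeasurable.restrict ?_
  · exact integrableOn_const (by
      rw [Set.uIoc]; exact measure_Ioc_lt_top.ne)
  · exact (ae_restrict_iff' measurableSet_uIoc).2 (Filter.Eventually.of_forall h)

variable {f : ℝ → ℝ} {C : ℝ}

lemma aux_intInt (hf : Measurable f) (h0 : ∀ s, 0 ≤ f s) (hC : ∀ s, f s ≤ C)
    (a b : ℝ) : IntervalIntegrable f volume a b :=
  intInt_of_bdd hf C a b (fun s _ => by rw [abs_of_nonneg (h0 s)]; exact hC s)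

lemma aux_sub (hf : Measurable f) (h0 : ∀ s, 0 ≤ f s) (hC : ∀ s, f s ≤ C) (a b : ℝ) :
    (∫ s in (0:ℝ)..b, f s) - ∫ s in (0:ℝ)..a, f s = ∫ s in a..b, f s :=
  intervalIntegral.integral_interval_sub_left (aux_intInt hf h0 hC 0 b) (aux_intInt hf h0 hC 0 a)

lemma aux_F_mono (hf : Measurable f) (h0 : ∀ s, 0 ≤ f s) (hC : ∀ s, f s ≤ C) :
    Monotone (fun t => ∫ s in (0:ℝ)..t, f s) := by
  intro a b hab
  have h := aux_sub hf h0 hC a b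
  have : 0 ≤ ∫ s in a..b, f s :=
    intervalIntegral.integral_nonneg hab (fun u _ => h0 u)
  simp only []
  linarith
lemma aux_F_meas (hf : Measurable f) (h0 : ∀ s, 0 ≤ f s) (hC : ∀ s, f s ≤ C) :
    Measurable (fun t => ∫ s in (0:ℝ)..t, f s) :=
  (aux_F_mono hf h0 hC).measurable

lemma aux_F_lip (hf : Measurable f) (h0 : ∀ s, 0 ≤ f s) (hC : ∀ s, f s ≤ C)
    {a b : ℝ} (hab : a ≤ b) :
    (∫ s in (0:ℝ)..b, f s) - ∫ s in (0:ℝ)..a, f s ≤ C * (b - a) := by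
  rw [aux_sub hf h0 hC a b]
  calc ∫ s in a..b, f s ≤ ∫ _s in a..b, C := by
        apply intervalIntegral.integral_mono_on hab (aux_intInt hf h0 hC a b)
          intervalIntegrable_const (fun x _ => hC x)
    _ = C * (b - a) := by simp [mul_comm]

lemma exp_ineq {A B : ℝ} (hA : 0 ≤ A) (hAB : A ≤ B) :
    (B - A) * Real.exp (-A) ≤ (Real.exp (-A) - Real.exp (-B)) + (B - A) ^ 2 := by
  set x := B - A with hx
  have hx0 : 0 ≤ x := by linarith
  have h1 : Real.exp (-B) = Real.exp (-A) * Real.exp (-x) := by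
    rw [← Real.exp_add]; congr 1; rw [hx]; ring
  have hEA : Real.exp (-A) ≤ 1 := Real.exp_le_one_iff.2 (by linarith)
  have hEA0 : 0 < Real.exp (-A) := Real.exp_pos _
  have hEx0 : 0 < Real.exp (-x) := Real.exp_pos _
  -- e^{-x} ≤ 1 - x + x^2 and x - 1 + e^{-x} ≥ 0
  have key1 : 1 - x ≤ Real.exp (-x) := by
    have := Real.add_one_le_exp (-x); linarith
  have key2 : Real.exp (-x) ≤ 1 - x + x ^ 2 := by
    have h2 : x + 1 ≤ Real.exp x := Real.add_one_le_exp x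
    have h3 : Real.exp (-x) * Real.exp x = 1 := by
      rw [← Real.exp_add]; simp
    nlinarith [Real.exp_pos x]
  -- (B-A) e^{-A} ≤ e^{-A} - e^{-B} + x^2
  have : x * Real.exp (-A) - (Real.exp (-A) - Real.exp (-B)) =
      Real.exp (-A) * (x - 1 + Real.exp (-x)) := by rw [h1]; ring
  have hfac : (0:ℝ) ≤ x - 1 + Real.exp (-x) := by linarith
  nlinarith [mul_le_of_le_one_left hfac hEA]

/-- Core analytic lemma: `∫_0^T f e^{-F} ≤ 1` for `F t = ∫_0^t f`. -/
lemma core_le_one (hC : 0 ≤ C) (hf : Measurable f) (h0 : ∀ s, 0 ≤ f s) (hfC : ∀ s, f s ≤ C)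
    {T : ℝ} (hT : 0 ≤ T) :
    (∫ s in (0:ℝ)..T, f s * Real.exp (-(∫ u in (0:ℝ)..s, f u))) ≤ 1 := by
  set F : ℝ → ℝ := fun t => ∫ u in (0:ℝ)..t, f u with hF
  set g : ℝ → ℝ := fun s => f s * Real.exp (-F s) with hg
  have hFmono := aux_F_mono hf h0 hfC
  have hF0 : F 0 = 0 := by simp [hF]
  have hFnn : ∀ s, 0 ≤ s → 0 ≤ F s := fun s hs => hF0 ▸ hFmono hs
  have hgmeas : Measurable g :=
    hf.mul ((aux_F_meas hf h0 hfC).neg.exp)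
  have hgnn : ∀ s, 0 ≤ g s := fun s => mul_nonneg (h0 s) (Real.exp_pos _).le
  have hgbd : ∀ s, 0 ≤ s → g s ≤ C := by
    intro s hs
    calc g s ≤ C * Real.exp (-F s) :=
          mul_le_mul_of_nonneg_right (hfC s) (Real.exp_pos _).le
      _ ≤ C * 1 := by
          apply mul_le_mul_of_nonneg_left _ hC
          exact Real.exp_le_one_iff.2 (by linarith [hFnn s hs])
      _ = C := mul_one C
  have main : ∀ n : ℕ, 0 < n → (∫ s in (0:ℝ)..T, g s) ≤ 1 + (C * T) ^ 2 / n := by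
    intro n hn
    set a : ℕ → ℝ := fun k => k * (T / n) with ha
    have hTn : 0 ≤ T / n := div_nonneg hT (Nat.cast_nonneg n)
    have hak : ∀ k : ℕ, 0 ≤ a k := fun k => mul_nonneg (Nat.cast_nonneg k) hTn
    have hastep : ∀ k : ℕ, a (k + 1) - a k = T / n := by
      intro k; simp only [ha]; push_cast; ring
    have hale : ∀ k : ℕ, a k ≤ a (k + 1) := fun k => by linarith [hastep k, hTn]
    have ha0 : a 0 = 0 := by simp [ha]
    have han : a n = T := by
      have hn' : (n : ℝ) ≠ 0 := Nat.cast_ne_zero.2 hn.ne'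
      simp only [ha]; field_simp
    have hint : ∀ k < n, IntervalIntegrable g volume (a k) (a (k + 1)) := by
      intro k _
      refine intInt_of_bdd hgmeas C _ _ (fun s hs => ?_)
      rw [Set.uIoc_of_le (hale k)] at hs
      have hs0 : 0 ≤ s := le_trans (hak k) hs.1.le
      rw [abs_of_nonneg (hgnn s)]; exact hgbd s hs0
    have hsum : (∫ s in (0:ℝ)..T, g s) =
        ∑ k ∈ Finset.range n, ∫ s in (a k)..(a (k+1)), g s := by
      rw [intervalIntegral.sum_integral_adjacent_intervals hint, ha0, han]
    have hpiece : ∀ k, k < n → (∫ s in (a k)..(a (k+1)), g s) ≤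
        (Real.exp (-F (a k)) - Real.exp (-F (a (k+1)))) + (C * (T/n)) * (F (a (k+1)) - F (a k)) := by
      intro k hk
      have step1 : (∫ s in (a k)..(a (k+1)), g s) ≤
          ∫ s in (a k)..(a (k+1)), f s * Real.exp (-F (a k)) := by
        apply intervalIntegral.integral_mono_on (hale k) (hint k hk)
          ((aux_intInt hf h0 hfC _ _).mul_const _)
        intro x hx
        have : F (a k) ≤ F x := hFmono hx.1
        exact mul_le_mul_of_nonneg_left (Real.exp_le_exp.2 (by linarith)) (h0 x)
      have step2 : (∫ s in (a k)..(a (k+1)), f s * Real.exp (-F (a k))) =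
          (F (a (k+1)) - F (a k)) * Real.exp (-F (a k)) := by
        rw [intervalIntegral.integral_mul_const, aux_sub hf h0 hfC]
      have hx0 : 0 ≤ F (a k) := hFnn _ (hak k)
      have hxB : F (a k) ≤ F (a (k+1)) := hFmono (hale k)
      have step3 := exp_ineq hx0 hxB
      have hlip : F (a (k+1)) - F (a k) ≤ C * (T / n) := by
        have := aux_F_lip hf h0 hfC (hale k)
        rwa [hastep k] at this
      have step4 : (F (a (k+1)) - F (a k)) ^ 2 ≤ (C * (T/n)) * (F (a (k+1)) - F (a k)) := by
        rw [pow_two]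
        exact mul_le_mul_of_nonneg_right hlip (by linarith)
      calc (∫ s in (a k)..(a (k+1)), g s) ≤ (F (a (k+1)) - F (a k)) * Real.exp (-F (a k)) := by
            rw [← step2]; exact step1
        _ ≤ (Real.exp (-F (a k)) - Real.exp (-F (a (k+1)))) + (F (a (k+1)) - F (a k)) ^ 2 := step3
        _ ≤ _ := by linarith
    have htel1 : ∑ k ∈ Finset.range n,
        (Real.exp (-F (a k)) - Real.exp (-F (a (k+1)))) = 1 - Real.exp (-F T) := by
      rw [Finset.sum_range_sub' (fun k => Real.exp (-F (a k)))]
      rw [ha0, hF0, han]; simp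
    have htel2 : ∑ k ∈ Finset.range n, (F (a (k+1)) - F (a k)) = F T := by
      rw [Finset.sum_range_sub (fun k => F (a k))]
      rw [ha0, hF0, han]; ring
    have hFT : F T ≤ C * T := by
      have := aux_F_lip hf h0 hfC hT
      have h00 : (∫ s in (0:ℝ)..(0:ℝ), f s) = 0 := by simp
      rw [h00] at this
      simpa using this
    calc (∫ s in (0:ℝ)..T, g s)
        = ∑ k ∈ Finset.range n, ∫ s in (a k)..(a (k+1)), g s := hsum
      _ ≤ ∑ k ∈ Finset.range n,
          ((Real.exp (-F (a k)) - Real.exp (-F (a (k+1)))) + (C * (T/n)) * (F (a (k+1)) - F (a k))) :=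
          Finset.sum_le_sum (fun k hk => hpiece k (Finset.mem_range.1 hk))
      _ = (1 - Real.exp (-F T)) + (C * (T/n)) * F T := by
          rw [Finset.sum_add_distrib, htel1, ← Finset.mul_sum, htel2]
      _ ≤ 1 + (C * T) ^ 2 / n := by
          have h1 : (0:ℝ) < Real.exp (-F T) := Real.exp_pos _
          have h2 : (C * (T/n)) * F T ≤ (C * (T/n)) * (C * T) := by
            apply mul_le_mul_of_nonneg_left hFT
            exact mul_nonneg hC hTn
          have h3 : (C * (T/n)) * (C * T) = (C * T)^2 / n := by
            field_simp
          linarith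
  by_contra hcon
  push_neg at hcon
  set I := ∫ s in (0:ℝ)..T, g s
  obtain ⟨n, hn⟩ := exists_nat_gt (max 1 ((C*T)^2 / (I - 1)))
  have hn1 : 0 < n := by
    have := lt_of_le_of_lt (le_max_left 1 _) hn
    exact_mod_cast lt_of_lt_of_le zero_lt_one this.le
  have hlt : (C*T)^2 / (I - 1) < n := lt_of_le_of_lt (le_max_right _ _) hn
  have hIn : I ≤ 1 + (C*T)^2 / n := main n hn1
  have hnpos : (0:ℝ) < n := Nat.cast_pos.2 hn1
  have hI1 : 0 < I - 1 := by linarith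
  have : (C*T)^2 < n * (I - 1) := by
    rwa [div_lt_iff₀ hI1] at hlt
  have : (C*T)^2 / n < I - 1 := by
    rw [div_lt_iff₀ hnpos]; linarith
  linarith



lemma simplex_bound (q : ℕ) (a b p p' : ℕ → ℝ)
    (ha : ∀ j ∈ Finset.Icc 1 q, 0 ≤ a j) (hb : ∀ j ∈ Finset.Icc 1 q, 0 ≤ b j)
    (hp' : ∀ j ∈ Finset.Icc 1 q, 0 ≤ p' j) (hp's : ∑ j ∈ Finset.Icc 1 q, p' j = 1) :
    (∑ j ∈ Finset.Icc 1 q,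
        |(if 0 < ∑ k ∈ Finset.Icc 1 q, a k then
            (fun j => a j / ∑ k ∈ Finset.Icc 1 q, a k) else p) j -
          (if 0 < ∑ k ∈ Finset.Icc 1 q, b k then
            (fun j => b j / ∑ k ∈ Finset.Icc 1 q, b k) else p') j|) *
        (∑ k ∈ Finset.Icc 1 q, a k) ≤
      2 * ∑ j ∈ Finset.Icc 1 q, |a j - b j| := by
  set A := ∑ k ∈ Finset.Icc 1 q, a k with hA
  set B := ∑ k ∈ Finset.Icc 1 q, b k with hB
  set S1 := ∑ j ∈ Finset.Icc 1 q, |a j - b j| with hS1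
  have hS1nn : 0 ≤ S1 := Finset.sum_nonneg (fun j _ => abs_nonneg _)
  have hA0 : 0 ≤ A := Finset.sum_nonneg ha
  have hB0 : 0 ≤ B := Finset.sum_nonneg hb
  have habs : |A - B| ≤ S1 := by
    rw [hA, hB, ← Finset.sum_sub_distrib]
    exact Finset.abs_sum_le_sum_abs _ _
  by_cases hA' : 0 < A
  · simp only [if_pos hA']
    by_cases hB' : 0 < B
    · simp only [if_pos hB']
      have key : ∀ j ∈ Finset.Icc 1 q,
          |a j / A - b j / B| * A ≤ |a j - b j| + b j * (|B - A| / B) := by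
        intro j hj
        have h0 : (a j / A - b j / B) * A = a j - b j + b j * ((B - A) / B) := by
          field_simp
          ring
        have h1 : |a j / A - b j / B| * A = |a j - b j + b j * ((B - A) / B)| := by
          rw [show |a j / A - b j / B| * A = |(a j / A - b j / B) * A| by
            rw [abs_mul, abs_of_pos hA'], h0]
        rw [h1]
        calc |a j - b j + b j * ((B - A) / B)| ≤ |a j - b j| + |b j * ((B - A) / B)| :=
              abs_add_le _ _
          _ = |a j - b j| + b j * (|B - A| / B) := by
              rw [abs_mul, abs_div, abs_of_nonneg (hb j hj), abs_of_pos hB']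
      calc (∑ j ∈ Finset.Icc 1 q, |a j / A - b j / B|) * A
          = ∑ j ∈ Finset.Icc 1 q, |a j / A - b j / B| * A := Finset.sum_mul _ _ _
        _ ≤ ∑ j ∈ Finset.Icc 1 q, (|a j - b j| + b j * (|B - A| / B)) :=
            Finset.sum_le_sum key
        _ = S1 + B * (|B - A| / B) := by
            rw [Finset.sum_add_distrib, ← Finset.sum_mul]
        _ = S1 + |B - A| := by
            rw [mul_div_cancel₀ _ (ne_of_gt hB')]
        _ ≤ 2 * S1 := by
            rw [abs_sub_comm] at habs; linarith
    · simp only [if_neg hB']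
      have hBz : B = 0 := le_antisymm (not_lt.1 hB') hB0
      have hbz : ∀ j ∈ Finset.Icc 1 q, b j = 0 := by
        apply (Finset.sum_eq_zero_iff_of_nonneg hb).1
        rw [← hB]; exact hBz
      have hS1A : S1 = A := by
        rw [hS1, hA]
        apply Finset.sum_congr rfl
        intro j hj
        rw [hbz j hj, sub_zero, abs_of_nonneg (ha j hj)]
      have hsum : ∑ j ∈ Finset.Icc 1 q, |a j / A - p' j| ≤ 2 := by
        calc ∑ j ∈ Finset.Icc 1 q, |a j / A - p' j|
            ≤ ∑ j ∈ Finset.Icc 1 q, (a j / A + p' j) := by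
              apply Finset.sum_le_sum
              intro j hj
              calc |a j / A - p' j| ≤ |a j / A| + |p' j| := abs_sub _ _
                _ = a j / A + p' j := by
                    rw [abs_of_nonneg (div_nonneg (ha j hj) hA0), abs_of_nonneg (hp' j hj)]
          _ = 2 := by
              rw [Finset.sum_add_distrib, hp's, ← Finset.sum_div, ← hA,
                div_self (ne_of_gt hA')]
              norm_num
      calc (∑ j ∈ Finset.Icc 1 q, |a j / A - p' j|) * A ≤ 2 * A :=
            mul_le_mul_of_nonneg_right hsum hA0
        _ = 2 * S1 := by rw [hS1A]
  · have hAz : A = 0 := le_antisymm (not_lt.1 hA') hA0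
    rw [hAz, mul_zero]
    positivity


/-- **Lemma C.4 (filter stability).** -/
theorem filter_stability
    (q d : ℕ) (hq : 1 ≤ q) (hd : 1 ≤ d)
    (ts : ℕ → ℝ) (hts0 : ts 0 = 0) (hts1 : 0 < ts 1)
    (htsmono : ∀ i, i < q → ts i ≤ ts (i + 1))
    (Clam : ℝ) (hClam : 0 ≤ Clam)
    (lam : ℕ → ℝ → ℝ) (hlam_meas : ∀ i, Measurable (lam i))
    (hlam_bd : ∀ i s, 0 ≤ s → lam i s ∈ Set.Icc 0 Clam)
    (Q : ℕ → ℕ → ℝ → ℝ) (hQ_meas : ∀ i j, Measurable (Q i j))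
    (hQ_bd : ∀ i j s, 0 ≤ s → Q i j s ∈ Set.Icc (0:ℝ) 1)
    (hQ_sum : ∀ i s, 0 ≤ s → ∑ j ∈ Finset.Icc 1 q, Q i j s = 1)
    (fW : (Fin d → ℝ) → ℝ) (hfW_meas : Measurable fW)
    (hfW_nonneg : ∀ y, 0 ≤ fW y) (hfW_int : ∫ y : Fin d → ℝ, fW y = 1)
    (phi : ℕ → Fin d → ℝ)
    (p p' : ℕ → ℝ) (hp : mem1 q p) (hp' : mem1 q p') :
    ∑ m ∈ Finset.range q,
        ∫ s in (ts m)..(ts (m + 1)),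
          ∫ y : Fin d → ℝ,
            l1 q (Psi q d ts lam Q fW phi p y s) (Psi q d ts lam Q fW phi p' y s) *
              psiBar q d ts lam Q fW phi m p y s
      ≤ 2 * l1 q p p' := by
  classical
  -- monotonicity facts about ts
  have ts_le : ∀ a b : ℕ, a ≤ b → b ≤ q → ts a ≤ ts b := by
    intro a b hab hbq
    induction b with
    | zero =>
      have : a = 0 := Nat.le_zero.1 hab
      rw [this]
    | succ n ih =>
      rcases Nat.lt_or_ge a (n + 1) with h | h
      · have h1 : a ≤ n := Nat.lt_succ_iff.1 h
        have h2 : n ≤ q := le_trans (Nat.le_succ n) hbq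
        exact le_trans (ih h1 h2) (htsmono n (Nat.lt_of_succ_le hbq))
      · have : a = n + 1 := le_antisymm hab h
        rw [this]
  have ts_nn : ∀ k, k ≤ q → 0 ≤ ts k := by
    intro k hk; rw [← hts0]; exact ts_le 0 k (Nat.zero_le k) hk
  set c : ℕ → ℝ := fun i => |p i - p' i| with hc
  have hcnn : ∀ i, 0 ≤ c i := fun i => abs_nonneg _
  -- truncated rate and its primitive
  set lt : ℕ → ℝ → ℝ := fun i s => if 0 ≤ s then lam i s else 0 with hltdef
  have hlt_meas : ∀ i, Measurable (lt i) := fun i =>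
    Measurable.ite (measurableSet_le measurable_const measurable_id) (hlam_meas i)
      measurable_const
  have hlt0 : ∀ i s, 0 ≤ lt i s := by
    intro i s
    by_cases h : (0:ℝ) ≤ s
    · simp only [hltdef, if_pos h]; exact (hlam_bd i s h).1
    · simp only [hltdef, if_neg h]; exact le_refl 0
  have hltC : ∀ i s, lt i s ≤ Clam := by
    intro i s
    by_cases h : (0:ℝ) ≤ s
    · simp only [hltdef, if_pos h]; exact (hlam_bd i s h).2
    · simp only [hltdef, if_neg h]; exact hClam
  have hLt_mono : ∀ i, Monotone (Lam lt i) := by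
    intro i
    have := aux_F_mono (hlt_meas i) (hlt0 i) (hltC i)
    exact this
  have hLt_meas : ∀ i, Measurable (Lam lt i) := fun i => (hLt_mono i).measurable
  have hLt0 : ∀ i, Lam lt i 0 = 0 := by intro i; simp [Lam]
  have hLt_nn : ∀ i s, 0 ≤ s → 0 ≤ Lam lt i s := by
    intro i s hs; rw [← hLt0 i]; exact hLt_mono i hs
  set ht : ℕ → ℝ → ℝ := fun i s => lt i s * Real.exp (-(Lam lt i s)) with hhtdef
  have hht_meas : ∀ i, Measurable (ht i) := fun i =>
    (hlt_meas i).mul ((hLt_meas i).neg.exp)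
  have hht_nn : ∀ i s, 0 ≤ ht i s := fun i s =>
    mul_nonneg (hlt0 i s) (Real.exp_pos _).le
  have hht_bd : ∀ i s, 0 ≤ s → ht i s ≤ Clam := by
    intro i s hs
    calc ht i s ≤ Clam * Real.exp (-(Lam lt i s)) :=
          mul_le_mul_of_nonneg_right (hltC i s) (Real.exp_pos _).le
      _ ≤ Clam * 1 := mul_le_mul_of_nonneg_left
          (Real.exp_le_one_iff.2 (by linarith [hLt_nn i s hs])) hClam
      _ = Clam := mul_one Clam
  have hht_int : ∀ i a b, 0 ≤ a → a ≤ b → IntervalIntegrable (ht i) volume a b := by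
    intro i a b ha hab
    refine intInt_of_bdd (hht_meas i) Clam a b (fun s hs => ?_)
    rw [Set.uIoc_of_le hab] at hs
    rw [abs_of_nonneg (hht_nn i s)]
    exact hht_bd i s (le_trans ha hs.1.le)
  have hLam_eq : ∀ i s, 0 ≤ s → Lam lam i s = Lam lt i s := by
    intro i s hs
    simp only [Lam]
    apply intervalIntegral.integral_congr
    intro u hu
    rw [Set.uIcc_of_le hs] at hu
    simp only [hltdef, if_pos hu.1]
  have hlt_eq : ∀ i s, 0 ≤ s → lt i s = lam i s := by
    intro i s hs; simp only [hltdef, if_pos hs]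
  -- fW is integrable
  have hfW_integrable : Integrable fW (volume : Measure (Fin d → ℝ)) := by
    by_contra h
    rw [integral_undef h] at hfW_int
    exact one_ne_zero hfW_int.symm
  -- nonnegativity of psiNum / psiBar
  have hpsiNum_nn : ∀ (m : ℕ) (r : ℕ → ℝ), (∀ i ∈ Finset.Icc 1 q, 0 ≤ r i) →
      ∀ (y : Fin d → ℝ) (s : ℝ), 0 ≤ s → ∀ j, 0 ≤ psiNum q d ts lam Q fW phi m r y s j := by
    intro m r hr y s hs j
    apply Finset.sum_nonneg
    intro i hi
    obtain ⟨hi1, hi2⟩ := Finset.mem_Icc.1 hi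
    have hri : 0 ≤ r i := hr i (Finset.mem_Icc.2 ⟨le_trans (Nat.le_add_left 1 m) hi1, hi2⟩)
    exact mul_nonneg (mul_nonneg (mul_nonneg (mul_nonneg hri (hlam_bd i s hs).1)
      (Real.exp_pos _).le) (hQ_bd i j s hs).1) (hfW_nonneg _)
  have hpsiBar_nn : ∀ (m : ℕ) (r : ℕ → ℝ), (∀ i ∈ Finset.Icc 1 q, 0 ≤ r i) →
      ∀ (y : Fin d → ℝ) (s : ℝ), 0 ≤ s → 0 ≤ psiBar q d ts lam Q fW phi m r y s := by
    intro m r hr y s hs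
    exact Finset.sum_nonneg (fun k _ => hpsiNum_nn m r hr y s hs k)
  -- main per-interval step
  have step_m : ∀ m, m < q →
      (∫ s in (ts m)..(ts (m + 1)),
          ∫ y : Fin d → ℝ,
            l1 q (Psi q d ts lam Q fW phi p y s) (Psi q d ts lam Q fW phi p' y s) *
              psiBar q d ts lam Q fW phi m p y s)
        ≤ 2 * ∑ i ∈ Finset.Icc (m + 1) q, c i * ∫ s in (ts m)..(ts (m + 1)), ht i s := by
    intro m hm
    have habm : ts m ≤ ts (m + 1) := htsmono m hm
    have htm0 : 0 ≤ ts m := ts_nn m hm.le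
    set INNER : ℝ → ℝ := fun s => ∫ y : Fin d → ℝ,
        l1 q (Psi q d ts lam Q fW phi p y s) (Psi q d ts lam Q fW phi p' y s) *
          psiBar q d ts lam Q fW phi m p y s with hINNER
    set G : ℝ → ℝ := fun s => 2 * ∑ i ∈ Finset.Icc (m + 1) q, c i * ht i s with hG
    -- the pointwise (in s) claim
    have Claim1 : ∀ s, ts m < s → s < ts (m + 1) →
        (∀ k, 1 ≤ k → k ≤ q → s ≠ ts k) → INNER s ≤ G s := by
      intro s hs1 hs2 hs3
      have hs0 : (0:ℝ) ≤ s := le_trans htm0 hs1.le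
      have hnot1 : ¬ ∃ k, 1 ≤ k ∧ k ≤ q ∧ s = ts k := by
        rintro ⟨k, h1, h2, h3⟩; exact hs3 k h1 h2 h3
      have hex2 : ∃ m', m' < q ∧ ts m' < s ∧ s < ts (m' + 1) := ⟨m, hm, hs1, hs2⟩
      have hinf : sInf {m' | m' < q ∧ ts m' < s ∧ s < ts (m' + 1)} = m := by
        apply le_antisymm (Nat.sInf_le
          (show m ∈ {m' | m' < q ∧ ts m' < s ∧ s < ts (m' + 1)} from ⟨hm, hs1, hs2⟩))
        by_contra hcon
        push_neg at hcon
        obtain ⟨hq', h1', h2'⟩ := Nat.sInf_mem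
          (⟨m, hm, hs1, hs2⟩ : Set.Nonempty {m' | m' < q ∧ ts m' < s ∧ s < ts (m' + 1)})
        have hle : sInf {m' | m' < q ∧ ts m' < s ∧ s < ts (m' + 1)} + 1 ≤ m :=
          Nat.succ_le_of_lt hcon
        have := ts_le _ m hle hm.le
        linarith
      have hPsi : ∀ (y : Fin d → ℝ) (r : ℕ → ℝ),
          Psi q d ts lam Q fW phi r y s =
            if 0 < psiBar q d ts lam Q fW phi m r y s then
              (fun j => psiNum q d ts lam Q fW phi m r y s j /
                psiBar q d ts lam Q fW phi m r y s)
            else r := by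
        intro y r
        unfold Psi
        rw [if_neg hnot1, if_pos hex2]
        simp only [hinf]
      -- pointwise (in y) bound
      have hpt : ∀ y : Fin d → ℝ,
          l1 q (Psi q d ts lam Q fW phi p y s) (Psi q d ts lam Q fW phi p' y s) *
            psiBar q d ts lam Q fW phi m p y s ≤
          2 * ∑ j ∈ Finset.Icc 1 q,
            |psiNum q d ts lam Q fW phi m p y s j - psiNum q d ts lam Q fW phi m p' y s j| := by
        intro y
        rw [hPsi y p, hPsi y p']
        have hb := simplex_bound q
          (fun j => psiNum q d ts lam Q fW phi m p y s j)
          (fun j => psiNum q d ts lam Q fW phi m p' y s j) p p'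
          (fun j _ => hpsiNum_nn m p hp.1 y s hs0 j)
          (fun j _ => hpsiNum_nn m p' hp'.1 y s hs0 j)
          (fun j hj => hp'.1 j hj) hp'.2
        simp only [l1, psiBar]
        exact hb
      have hdiff : ∀ (y : Fin d → ℝ) (j : ℕ),
          |psiNum q d ts lam Q fW phi m p y s j - psiNum q d ts lam Q fW phi m p' y s j| ≤
          ∑ i ∈ Finset.Icc (m + 1) q,
            c i * lam i s * Real.exp (-(Lam lam i s)) * Q i j s * fW (y - phi j) := by
        intro y j
        simp only [psiNum, ← Finset.sum_sub_distrib]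
        refine le_trans (Finset.abs_sum_le_sum_abs _ _) (Finset.sum_le_sum ?_)
        intro i _
        have h1 : p i * lam i s * Real.exp (-(Lam lam i s)) * Q i j s * fW (y - phi j) -
            p' i * lam i s * Real.exp (-(Lam lam i s)) * Q i j s * fW (y - phi j) =
            (p i - p' i) * lam i s * Real.exp (-(Lam lam i s)) * Q i j s * fW (y - phi j) := by
          ring
        rw [h1, abs_mul, abs_mul, abs_mul, abs_mul, abs_of_nonneg (hlam_bd i s hs0).1,
          abs_of_nonneg (Real.exp_pos _).le, abs_of_nonneg (hQ_bd i j s hs0).1,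
          abs_of_nonneg (hfW_nonneg _)]
      -- integrate in y
      have hDint : ∀ j ∈ Finset.Icc 1 q, Integrable (fun y : Fin d → ℝ =>
          ∑ i ∈ Finset.Icc (m + 1) q,
            c i * lam i s * Real.exp (-(Lam lam i s)) * Q i j s * fW (y - phi j)) volume := by
        intro j _
        apply integrable_finset_sum
        intro i _
        exact (hfW_integrable.comp_sub_right (phi j)).const_mul _
      have hIy : INNER s ≤ ∫ y : Fin d → ℝ,
          2 * ∑ j ∈ Finset.Icc 1 q, ∑ i ∈ Finset.Icc (m + 1) q,
            c i * lam i s * Real.exp (-(Lam lam i s)) * Q i j s * fW (y - phi j) := by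
        apply integral_mono_of_nonneg
        · exact Filter.Eventually.of_forall (fun y => mul_nonneg
            (Finset.sum_nonneg (fun j _ => abs_nonneg _)) (hpsiBar_nn m p hp.1 y s hs0))
        · exact (integrable_finset_sum _ hDint).const_mul 2
        · refine Filter.Eventually.of_forall (fun y => le_trans (hpt y) ?_)
          have h2 := Finset.sum_le_sum (fun j (_ : j ∈ Finset.Icc 1 q) => hdiff y j)
          beta_reduce
          linarith
      have hIval : (∫ y : Fin d → ℝ,
          2 * ∑ j ∈ Finset.Icc 1 q, ∑ i ∈ Finset.Icc (m + 1) q,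
            c i * lam i s * Real.exp (-(Lam lam i s)) * Q i j s * fW (y - phi j)) = G s := by
        rw [MeasureTheory.integral_const_mul, MeasureTheory.integral_finset_sum _ hDint]
        have hjval : ∀ j ∈ Finset.Icc 1 q, (∫ y : Fin d → ℝ,
            ∑ i ∈ Finset.Icc (m + 1) q,
              c i * lam i s * Real.exp (-(Lam lam i s)) * Q i j s * fW (y - phi j)) =
            ∑ i ∈ Finset.Icc (m + 1) q,
              c i * lam i s * Real.exp (-(Lam lam i s)) * Q i j s := by
          intro j _
          rw [MeasureTheory.integral_finset_sum _
            (fun i _ => (hfW_integrable.comp_sub_right (phi j)).const_mul _)]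
          apply Finset.sum_congr rfl
          intro i _
          rw [MeasureTheory.integral_const_mul, MeasureTheory.integral_sub_right_eq_self fW (phi j),
            hfW_int, mul_one]
        rw [Finset.sum_congr rfl hjval, Finset.sum_comm]
        simp only [hG]
        congr 1
        apply Finset.sum_congr rfl
        intro i _
        rw [← Finset.mul_sum, hQ_sum i s hs0, mul_one]
        simp only [hhtdef]
        rw [hlt_eq i s hs0, ← hLam_eq i s hs0]
        ring
      rw [← hIval]
      exact hIy
    -- nonnegativity of INNER on the interval
    have Claim2 : ∀ s ∈ Set.Ioc (ts m) (ts (m + 1)), 0 ≤ INNER s := by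
      intro s hs
      have hs0 : (0:ℝ) ≤ s := le_trans htm0 hs.1.le
      apply integral_nonneg
      intro y
      exact mul_nonneg (Finset.sum_nonneg (fun j _ => abs_nonneg _))
        (hpsiBar_nn m p hp.1 y s hs0)
    have hGmeas : Measurable G := by
      apply Measurable.const_mul
      exact Finset.measurable_sum _ (fun i _ => (hht_meas i).const_mul _)
    have hGint : IntegrableOn G (Set.Ioc (ts m) (ts (m + 1))) volume := by
      refine Integrable.mono' (g := fun _ => 2 * ∑ i ∈ Finset.Icc (m + 1) q, c i * Clam)
        (integrableOn_const measure_Ioc_lt_top.ne)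
        hGmeas.aestronglyMeasurable.restrict ?_
      refine (ae_restrict_iff' measurableSet_Ioc).2 (Filter.Eventually.of_forall ?_)
      intro s hs
      have hs0 : (0:ℝ) ≤ s := le_trans htm0 hs.1.le
      have hGnn : 0 ≤ G s := mul_nonneg (by norm_num)
        (Finset.sum_nonneg (fun i _ => mul_nonneg (hcnn i) (hht_nn i s)))
      rw [Real.norm_eq_abs, abs_of_nonneg hGnn]
      apply mul_le_mul_of_nonneg_left _ (by norm_num : (0:ℝ) ≤ 2)
      exact Finset.sum_le_sum (fun i _ =>
        mul_le_mul_of_nonneg_left (hht_bd i s hs0) (hcnn i))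
    -- a.e. bound on the interval
    have hN : volume (ts '' {k : ℕ | 1 ≤ k ∧ k ≤ q}) = 0 := by
      apply Set.Finite.measure_zero
      exact Set.Finite.image ts (Set.Finite.subset (Set.finite_Icc 1 q)
        (fun k hk => Set.mem_Icc.2 hk))
    have hae : ∀ᵐ s ∂(volume.restrict (Set.Ioc (ts m) (ts (m + 1)))), INNER s ≤ G s := by
      have h1 : ∀ᵐ s ∂(volume.restrict (Set.Ioc (ts m) (ts (m + 1)))),
          s ∈ Set.Ioc (ts m) (ts (m + 1)) := ae_restrict_mem measurableSet_Ioc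
      have h2 : ∀ᵐ s ∂(volume.restrict (Set.Ioc (ts m) (ts (m + 1)))),
          s ∉ ts '' {k : ℕ | 1 ≤ k ∧ k ≤ q} :=
        ae_restrict_of_ae (measure_eq_zero_iff_ae_notMem.1 hN)
      filter_upwards [h1, h2] with s hs1 hs2
      apply Claim1 s hs1.1
      · rcases lt_or_eq_of_le hs1.2 with h | h
        · exact h
        · exact absurd ⟨m + 1, ⟨Nat.le_add_left 1 m, hm⟩, h.symm⟩ hs2
      · intro k hk1 hk2 heq
        exact hs2 ⟨k, ⟨hk1, hk2⟩, heq.symm⟩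
    calc (∫ s in (ts m)..(ts (m + 1)),
          ∫ y : Fin d → ℝ,
            l1 q (Psi q d ts lam Q fW phi p y s) (Psi q d ts lam Q fW phi p' y s) *
              psiBar q d ts lam Q fW phi m p y s)
        = ∫ s in Set.Ioc (ts m) (ts (m + 1)), INNER s := by
          rw [intervalIntegral.integral_of_le habm]
      _ ≤ ∫ s in Set.Ioc (ts m) (ts (m + 1)), G s := by
          apply integral_mono_of_nonneg _ hGint hae
          exact (ae_restrict_iff' measurableSet_Ioc).2
            (Filter.Eventually.of_forall (fun s hs => Claim2 s hs))
      _ = ∫ s in (ts m)..(ts (m + 1)), G s := (intervalIntegral.integral_of_le habm).symm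
      _ = 2 * ∑ i ∈ Finset.Icc (m + 1) q, c i * ∫ s in (ts m)..(ts (m + 1)), ht i s := by
          rw [hG]
          rw [intervalIntegral.integral_const_mul]
          congr 1
          rw [intervalIntegral.integral_finset_sum
            (fun i _ => ((hht_int i _ _ htm0 habm).const_mul _))]
          apply Finset.sum_congr rfl
          intro i _
          rw [intervalIntegral.integral_const_mul]
  -- combine over m
  have hswap : ∑ m ∈ Finset.range q, ∑ i ∈ Finset.Icc (m + 1) q,
      c i * ∫ s in (ts m)..(ts (m + 1)), ht i s =
      ∑ i ∈ Finset.Icc 1 q, ∑ m ∈ Finset.range i,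
      c i * ∫ s in (ts m)..(ts (m + 1)), ht i s := by
    apply Finset.sum_comm'
    intro x y
    simp only [Finset.mem_range, Finset.mem_Icc]
    omega
  have hcore : ∀ i ∈ Finset.Icc 1 q, (∑ m ∈ Finset.range i,
      ∫ s in (ts m)..(ts (m + 1)), ht i s) ≤ 1 := by
    intro i hi
    obtain ⟨hi1, hi2⟩ := Finset.mem_Icc.1 hi
    have hadj : ∀ k < i, IntervalIntegrable (ht i) volume (ts k) (ts (k + 1)) := by
      intro k hk
      have hkq : k < q := lt_of_lt_of_le hk hi2
      exact hht_int i _ _ (ts_nn k hkq.le) (htsmono k hkq)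
    rw [intervalIntegral.sum_integral_adjacent_intervals hadj, hts0]
    have := core_le_one hClam (hlt_meas i) (hlt0 i) (hltC i) (ts_nn i hi2)
    simpa only [hhtdef, Lam] using this
  calc ∑ m ∈ Finset.range q,
        ∫ s in (ts m)..(ts (m + 1)),
          ∫ y : Fin d → ℝ,
            l1 q (Psi q d ts lam Q fW phi p y s) (Psi q d ts lam Q fW phi p' y s) *
              psiBar q d ts lam Q fW phi m p y s
      ≤ ∑ m ∈ Finset.range q, 2 * ∑ i ∈ Finset.Icc (m + 1) q,
          c i * ∫ s in (ts m)..(ts (m + 1)), ht i s :=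
        Finset.sum_le_sum (fun m hm => step_m m (Finset.mem_range.1 hm))
    _ = 2 * ∑ i ∈ Finset.Icc 1 q, ∑ m ∈ Finset.range i,
          c i * ∫ s in (ts m)..(ts (m + 1)), ht i s := by
        rw [← Finset.mul_sum, hswap]
    _ ≤ 2 * ∑ i ∈ Finset.Icc 1 q, c i := by
        apply mul_le_mul_of_nonneg_left _ (by norm_num : (0:ℝ) ≤ 2)
        apply Finset.sum_le_sum
        intro i hi
        rw [← Finset.mul_sum]
        calc c i * ∑ m ∈ Finset.range i, ∫ s in (ts m)..(ts (m + 1)), ht i s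
            ≤ c i * 1 := mul_le_mul_of_nonneg_left (hcore i hi) (hcnn i)
          _ = c i := mul_one _
    _ = 2 * l1 q p p' := by rw [l1]


end PDMP
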